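/- arXiv:2009.08540 — 2 statements merged into one kernel-verified Lean document; each statement's English description precedes it below -/
import Mathlib

section
/- Let λ : H → k be a partial action of a Hopf algebra H on k, g, t ∈ G(H), and x a (g,t)-primitive element. If λ(g) = 1 and λ(t) = 0, then λ(x t⁻¹) = −λ(x), where t⁻¹ = S(t) is the inverse of the group-like t. -/
open TensorProduct Coalgebra HopfAlgebra

variable (k : Type*) [Field k]

/-- The convolution-type expression `h ↦ l(h₁) m(h₂)` (Sweedler notation). -/
noncomputable def pconv {H : Type*} [Ring H] [Bialgebra k H] (l m : H →ₗ[k] k) : H →ₗ[k] k :=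
  (TensorProduct.lid k k).toLinearMap ∘ₗ TensorProduct.map l m ∘ₗ comul

/-- A partial action of the Hopf (bi)algebra `H` on its base field `k`:
`l 1 = 1` and `l h * l v = l h₁ * l (h₂ * v)` for all `h v`. -/
def IsPartialAction {H : Type*} [Ring H] [Bialgebra k H] (l : H →ₗ[k] k) : Prop :=
  l 1 = 1 ∧ ∀ h v : H, l h * l v = pconv k l (l ∘ₗ LinearMap.mulRight k v) h

/-- The map `h ↦ l(h₁) h₂` (Sweedler notation). -/
noncomputable def lamL {H : Type*} [Ring H] [Bialgebra k H] (l : H →ₗ[k] k) : H →ₗ[k] H :=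
  (TensorProduct.lid k H).toLinearMap ∘ₗ TensorProduct.map l LinearMap.id ∘ₗ comul

/-- The map `h ↦ h₁ l(h₂)` (Sweedler notation); note `lamL l (lamR l h) = l(h₁) h₂ l(h₃)`. -/
noncomputable def lamR {H : Type*} [Ring H] [Bialgebra k H] (l : H →ₗ[k] k) : H →ₗ[k] H :=
  (TensorProduct.rid k H).toLinearMap ∘ₗ TensorProduct.map LinearMap.id l ∘ₗ comul

/-- A group-like element: nonzero with `Δ g = g ⊗ g`. -/
def IsGroupLikeElemNZ {H : Type*} [Ring H] [Bialgebra k H] (g : H) : Prop :=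
  g ≠ 0 ∧ comul (R := k) g = g ⊗ₜ[k] g

lemma counit_of_groupLike {H : Type*} [Ring H] [Bialgebra k H] {t : H}
    (ht : IsGroupLikeElemNZ k t) : counit (R := k) t = 1 := by
  have h := Coalgebra.rTensor_counit_comul (R := k) t
  rw [ht.2] at h
  have h2 : (counit (R := k) t) • t = (1 : k) • t := by
    have := congrArg (TensorProduct.lid k H) h
    simpa using this
  have h3 : (counit (R := k) t - 1) • t = 0 := by
    rw [sub_smul, h2, one_smul, sub_self]
  rcases smul_eq_zero.1 h3 with h' | h'
  · exact sub_eq_zero.1 h'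
  · exact absurd h' ht.1

lemma antipode_mul_self {H : Type*} [Ring H] [HopfAlgebra k H] {t : H}
    (ht : IsGroupLikeElemNZ k t) : antipode (R := k) t * t = 1 := by
  have h := HopfAlgebra.mul_antipode_rTensor_comul_apply (R := k) t
  rw [ht.2, counit_of_groupLike k ht] at h
  simpa using h

lemma self_mul_antipode {H : Type*} [Ring H] [HopfAlgebra k H] {t : H}
    (ht : IsGroupLikeElemNZ k t) : t * antipode (R := k) t = 1 := by
  have h := HopfAlgebra.mul_antipode_lTensor_comul_apply (R := k) t
  rw [ht.2, counit_of_groupLike k ht] at h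
  simpa using h

lemma comul_antipode_groupLike {H : Type*} [Ring H] [HopfAlgebra k H] {t : H}
    (ht : IsGroupLikeElemNZ k t) :
    comul (R := k) (antipode (R := k) t) = antipode (R := k) t ⊗ₜ[k] antipode (R := k) t := by
  set s := antipode (R := k) t
  have h1 : comul (R := k) t * comul (R := k) s = 1 := by
    rw [← Bialgebra.comul_mul, self_mul_antipode k ht, Bialgebra.comul_one]
  have h2 : comul (R := k) t * (s ⊗ₜ[k] s) = 1 := by
    rw [ht.2, Algebra.TensorProduct.tmul_mul_tmul, self_mul_antipode k ht,
      Algebra.TensorProduct.one_def]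
  have h3 : comul (R := k) s * comul (R := k) t = 1 := by
    rw [← Bialgebra.comul_mul, antipode_mul_self k ht, Bialgebra.comul_one]
  calc comul (R := k) s = comul (R := k) s * (comul (R := k) t * (s ⊗ₜ[k] s)) := by
        rw [h2, mul_one]
    _ = (comul (R := k) s * comul (R := k) t) * (s ⊗ₜ[k] s) := by rw [mul_assoc]
    _ = s ⊗ₜ[k] s := by rw [h3, one_mul]

/-- if `x` is `(g,t)`-primitive, `l g = 1` and `l t = 0`,
then `l (x * t⁻¹) = - l x`, where `t⁻¹ = S t`. -/
theorem partialAction_skewPrimitive_inv {H : Type*} [Ring H] [HopfAlgebra k H]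
    {l : H →ₗ[k] k} (hpa : IsPartialAction k l) {g t x : H}
    (hg : IsGroupLikeElemNZ k g) (ht : IsGroupLikeElemNZ k t)
    (hx : comul (R := k) x = x ⊗ₜ[k] g + t ⊗ₜ[k] x)
    (hg1 : l g = 1) (ht0 : l t = 0) :
    l (x * antipode (R := k) t) = - l x := by
  set s := antipode (R := k) t with hs
  have hcomul : comul (R := k) (x * s)
      = (x * s) ⊗ₜ[k] (g * s) + (1 : H) ⊗ₜ[k] (x * s) := by
    rw [Bialgebra.comul_mul, hx, comul_antipode_groupLike k ht, add_mul,
      Algebra.TensorProduct.tmul_mul_tmul, Algebra.TensorProduct.tmul_mul_tmul,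
      self_mul_antipode k ht]
  have key := hpa.2 (x * s) t
  rw [ht0, mul_zero] at key
  rw [pconv] at key
  simp only [LinearMap.coe_comp, Function.comp_apply, LinearEquiv.coe_coe] at key
  rw [hcomul, map_add, TensorProduct.map_tmul, TensorProduct.map_tmul, map_add] at key
  simp only [LinearMap.coe_comp, Function.comp_apply, LinearMap.mulRight_apply,
    TensorProduct.lid_tmul, smul_eq_mul] at key
  rw [mul_assoc, mul_assoc, antipode_mul_self k ht, mul_one, mul_one, hpa.1, hg1,
    mul_one, one_mul] at key
  linear_combination -key
end

section
/- Let H be a finite-dimensional Hopf algebra and λ : H → k a partial action of H on k. Then H_λ = {λ(h₁)h₂ | h ∈ H} is a Hopf subalgebra of H if and only if λ(h₁)h₂ = λ(h₁)h₂λ(h₃) holds for all h ∈ H. -/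
open TensorProduct Coalgebra HopfAlgebra

variable (k : Type*) [Field k]

/-- A group-like element: nonzero with `Δ g = g ⊗ g`. -/
def IsGroupLikeElem' {H : Type*} [Ring H] [Bialgebra k H] (g : H) : Prop :=
  g ≠ 0 ∧ comul (R := k) g = g ⊗ₜ[k] g

section Lemmas

variable {H : Type*} [Ring H] [Bialgebra k H] (l m : H →ₗ[k] k)

lemma lamL_sum {h : H} {ι : Type*} (s : Finset ι) (a b : ι → H)
    (hc : comul (R := k) h = ∑ i ∈ s, a i ⊗ₜ[k] b i) :
    lamL k l h = ∑ i ∈ s, l (a i) • b i := by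
  simp [lamL, hc, TensorProduct.map_tmul]

lemma lamR_sum {h : H} {ι : Type*} (s : Finset ι) (a b : ι → H)
    (hc : comul (R := k) h = ∑ i ∈ s, a i ⊗ₜ[k] b i) :
    lamR k l h = ∑ i ∈ s, l (b i) • a i := by
  simp [lamR, hc, TensorProduct.map_tmul]

lemma pconv_sum {h : H} {ι : Type*} (s : Finset ι) (a b : ι → H)
    (hc : comul (R := k) h = ∑ i ∈ s, a i ⊗ₜ[k] b i) :
    pconv k l m h = ∑ i ∈ s, l (a i) * m (b i) := by
  simp [pconv, hc, TensorProduct.map_tmul, smul_eq_mul]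

variable {l}

lemma pconv_ll (hpa : IsPartialAction k l) (h : H) : pconv k l l h = l h := by
  have h2 := hpa.2 h 1
  have : (l ∘ₗ LinearMap.mulRight k (1 : H)) = l := by
    ext x; simp
  rw [this, hpa.1, mul_one] at h2
  exact h2.symm

lemma l_lamL (hpa : IsPartialAction k l) (h : H) : l (lamL k l h) = l h := by
  have r := ℛ k h
  rw [lamL_sum k l r.index r.left r.right r.eq.symm, map_sum, ← pconv_ll k hpa h,
    pconv_sum k l l r.index r.left r.right r.eq.symm]
  simp [smul_eq_mul]

lemma counit_lamL (h : H) : counit (R := k) (lamL k l h) = l h := by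
  have r := ℛ k h
  have key := sum_tmul_counit_eq (R := k) r
  apply_fun ((TensorProduct.lid k k).toLinearMap ∘ₗ TensorProduct.map l LinearMap.id) at key
  simp only [map_sum, LinearMap.comp_apply, TensorProduct.map_tmul, LinearMap.id_apply,
    LinearEquiv.coe_coe, TensorProduct.lid_tmul] at key
  rw [lamL_sum k l r.index r.left r.right r.eq.symm, map_sum]
  simpa [smul_eq_mul, mul_comm] using key

lemma lamL_one (hpa : IsPartialAction k l) : lamL k l (1 : H) = 1 := by
  have : comul (R := k) (1 : H) = (1 : H) ⊗ₜ[k] 1 := by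
    simpa [Algebra.TensorProduct.one_def] using Bialgebra.comul_one k (A := H)
  rw [lamL_sum k l {0} (fun _ : ℕ => (1:H)) (fun _ => (1:H)) (by simpa using this)]
  simp [hpa.1]

lemma comul_lamL (h : H) :
    comul (R := k) (lamL k l h) =
      TensorProduct.map (lamL k l) LinearMap.id (comul (R := k) h) := by
  have r := ℛ k h
  have a₁ : (i : r.ι) → Coalgebra.Repr k (r.left i) (H × H) := fun i => ℛ k (r.left i)
  have a₂ : (i : r.ι) → Coalgebra.Repr k (r.right i) (H × H) := fun i => ℛ k (r.right i)
  have key := sum_tmul_tmul_eq r a₁ a₂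
  apply_fun ((TensorProduct.lid k (H ⊗[k] H)).toLinearMap ∘ₗ
    TensorProduct.map l LinearMap.id) at key
  simp only [map_sum, LinearMap.comp_apply, TensorProduct.map_tmul, LinearMap.id_apply,
    LinearEquiv.coe_coe, TensorProduct.lid_tmul] at key
  rw [lamL_sum k l r.index r.left r.right r.eq.symm, map_sum, ← r.eq, map_sum]
  calc ∑ i ∈ r.index, comul (R := k) (l (r.left i) • r.right i)
      = ∑ i ∈ r.index, ∑ j ∈ (a₂ i).index,
          l (r.left i) • ((a₂ i).left j ⊗ₜ[k] (a₂ i).right j) := by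
        refine Finset.sum_congr rfl fun i _ => ?_
        rw [map_smul, ← (a₂ i).eq, Finset.smul_sum]
    _ = ∑ i ∈ r.index, ∑ j ∈ (a₁ i).index,
          l ((a₁ i).left j) • ((a₁ i).right j ⊗ₜ[k] r.right i) := key.symm
    _ = ∑ i ∈ r.index, TensorProduct.map (lamL k l) LinearMap.id (r.left i ⊗ₜ[k] r.right i) := by
        refine Finset.sum_congr rfl fun i _ => ?_
        rw [TensorProduct.map_tmul, LinearMap.id_apply,
          lamL_sum k l (a₁ i).index (a₁ i).left (a₁ i).right (a₁ i).eq.symm,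
          TensorProduct.sum_tmul]
        exact Finset.sum_congr rfl fun j _ => by rw [TensorProduct.smul_tmul']

lemma lamL_lamL (hpa : IsPartialAction k l) (h : H) :
    lamL k l (lamL k l h) = lamL k l h := by
  have hl : l ∘ₗ lamL k l = l := LinearMap.ext (l_lamL k hpa)
  have : lamL k l (lamL k l h) =
      (TensorProduct.lid k H).toLinearMap
        (TensorProduct.map l LinearMap.id (comul (R := k) (lamL k l h))) := rfl
  rw [this, comul_lamL, ← LinearMap.comp_apply (TensorProduct.map l LinearMap.id),
    ← TensorProduct.map_comp, hl, LinearMap.id_comp]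
  rfl

lemma lamL_lamR_comm (h : H) :
    lamL k l (lamR k l h) = lamR k l (lamL k l h) := by
  have r := ℛ k h
  have a₁ : (i : r.ι) → Coalgebra.Repr k (r.left i) (H × H) := fun i => ℛ k (r.left i)
  have a₂ : (i : r.ι) → Coalgebra.Repr k (r.right i) (H × H) := fun i => ℛ k (r.right i)
  have key := sum_tmul_tmul_eq r a₁ a₂
  apply_fun ((TensorProduct.lid k H).toLinearMap ∘ₗ
    TensorProduct.map l ((TensorProduct.rid k H).toLinearMap ∘ₗ
      TensorProduct.map LinearMap.id l)) at key
  simp only [map_sum, LinearMap.comp_apply, TensorProduct.map_tmul, LinearMap.id_apply,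
    LinearEquiv.coe_coe, TensorProduct.lid_tmul, TensorProduct.rid_tmul, map_smul] at key
  rw [lamR_sum k l r.index r.left r.right r.eq.symm, map_sum,
    lamL_sum k l r.index r.left r.right r.eq.symm, map_sum]
  calc ∑ i ∈ r.index, lamL k l (l (r.right i) • r.left i)
      = ∑ i ∈ r.index, ∑ j ∈ (a₁ i).index,
          l ((a₁ i).left j) • l (r.right i) • (a₁ i).right j := by
        refine Finset.sum_congr rfl fun i _ => ?_
        rw [map_smul, lamL_sum k l (a₁ i).index (a₁ i).left (a₁ i).right (a₁ i).eq.symm,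
          Finset.smul_sum]
        exact Finset.sum_congr rfl fun j _ => smul_comm _ _ _
    _ = ∑ i ∈ r.index, ∑ j ∈ (a₂ i).index,
          l (r.left i) • l ((a₂ i).right j) • (a₂ i).left j := key
    _ = ∑ i ∈ r.index, lamR k l (l (r.left i) • r.right i) := by
        refine Finset.sum_congr rfl fun i _ => ?_
        rw [map_smul, lamR_sum k l (a₂ i).index (a₂ i).left (a₂ i).right (a₂ i).eq.symm,
          Finset.smul_sum]

lemma l_eq_counit_on_range (hpa : IsPartialAction k l) {b : H}
    (hb : b ∈ LinearMap.range (lamL k l)) : l b = counit (R := k) b := by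
  obtain ⟨x, rfl⟩ := hb
  rw [l_lamL k hpa, counit_lamL]

lemma forward_dir (hpa : IsPartialAction k l)
    (hΔ : ∀ a ∈ LinearMap.range (lamL k l),
      comul (R := k) a ∈ LinearMap.range
        (TensorProduct.map (LinearMap.range (lamL k l)).subtype
          (LinearMap.range (lamL k l)).subtype)) (h : H) :
    lamL k l h = lamL k l (lamR k l h) := by
  rw [lamL_lamR_comm]
  obtain ⟨t, ht⟩ := hΔ (lamL k l h) ⟨h, rfl⟩
  have comp : TensorProduct.map LinearMap.id l ∘ₗ
      TensorProduct.map (LinearMap.range (lamL k l)).subtype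
        (LinearMap.range (lamL k l)).subtype =
      LinearMap.lTensor H (counit (R := k)) ∘ₗ
        TensorProduct.map (LinearMap.range (lamL k l)).subtype
          (LinearMap.range (lamL k l)).subtype := by
    ext a b
    simp only [LinearMap.coe_comp, Function.comp_apply, AlgebraTensorModule.curry_apply,
      TensorProduct.curry_apply, LinearMap.coe_restrictScalars, TensorProduct.map_tmul,
      LinearMap.id_apply, LinearMap.lTensor_tmul, Submodule.coe_subtype]
    rw [l_eq_counit_on_range k hpa b.2]
  have : lamR k l (lamL k l h) =
      (TensorProduct.rid k H).toLinearMap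
        (TensorProduct.map LinearMap.id l (comul (R := k) (lamL k l h))) := rfl
  rw [this, ← ht, ← LinearMap.comp_apply (TensorProduct.map LinearMap.id l), comp,
    LinearMap.comp_apply, ht, lTensor_counit_comul]
  simp

lemma lamL_sum₂ {h : H} {ι ι' : Type*} (s : Finset ι) (t : Finset ι') (a b : ι → ι' → H)
    (hc : comul (R := k) h = ∑ i ∈ s, ∑ j ∈ t, a i j ⊗ₜ[k] b i j) :
    lamL k l h = ∑ i ∈ s, ∑ j ∈ t, l (a i j) • b i j := by
  simp [lamL, hc, TensorProduct.map_tmul]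

lemma mul_lamL (hpa : IsPartialAction k l) (x y : H) :
    lamL k l x * lamL k l y = lamL k l (lamL k l x * y) := by
  have r := ℛ k x
  have s := ℛ k y
  have σ : (i : r.ι) → Coalgebra.Repr k (r.left i) (H × H) := fun i => ℛ k (r.left i)
  have τ : (i : r.ι) → Coalgebra.Repr k (r.right i) (H × H) := fun i => ℛ k (r.right i)
  have key := sum_tmul_tmul_eq r σ τ
  have hcm : ∀ i, comul (R := k) (r.right i * y) =
      ∑ p ∈ (τ i).index, ∑ j ∈ s.index,
        ((τ i).left p * s.left j) ⊗ₜ[k] ((τ i).right p * s.right j) := by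
    intro i
    rw [Bialgebra.comul_mul, ← (τ i).eq, ← s.eq, Finset.sum_mul_sum]
    exact Finset.sum_congr rfl fun p _ => Finset.sum_congr rfl fun j _ =>
      Algebra.TensorProduct.tmul_mul_tmul _ _ _ _
  have key2 : ∀ j, ∑ i ∈ r.index, ∑ p ∈ (σ i).index,
        (l ((σ i).left p) * l ((σ i).right p * s.left j)) • (r.right i * s.right j)
      = ∑ i ∈ r.index, ∑ p ∈ (τ i).index,
        (l (r.left i) * l ((τ i).left p * s.left j)) • ((τ i).right p * s.right j) := by
    intro j
    have hk := congrArg ((TensorProduct.lid k H).toLinearMap ∘ₗ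
      TensorProduct.map l ((TensorProduct.lid k H).toLinearMap ∘ₗ
        TensorProduct.map (l ∘ₗ LinearMap.mulRight k (s.left j))
          (LinearMap.mulRight k (s.right j)))) key
    simpa only [map_sum, LinearMap.comp_apply, TensorProduct.map_tmul,
      LinearEquiv.coe_coe, TensorProduct.lid_tmul, LinearMap.mulRight_apply,
      map_smul, smul_smul] using hk
  calc lamL k l x * lamL k l y
      = ∑ i ∈ r.index, ∑ j ∈ s.index,
          (l (r.left i) * l (s.left j)) • (r.right i * s.right j) := by
        rw [lamL_sum k l r.index r.left r.right r.eq.symm,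
          lamL_sum k l s.index s.left s.right s.eq.symm, Finset.sum_mul_sum]
        exact Finset.sum_congr rfl fun i _ => Finset.sum_congr rfl fun j _ => by
          rw [smul_mul_assoc, mul_smul_comm, smul_smul]
    _ = ∑ i ∈ r.index, ∑ j ∈ s.index, ∑ p ∈ (σ i).index,
          (l ((σ i).left p) * l ((σ i).right p * s.left j)) • (r.right i * s.right j) := by
        refine Finset.sum_congr rfl fun i _ => Finset.sum_congr rfl fun j _ => ?_
        rw [hpa.2 (r.left i) (s.left j),
          pconv_sum k l (l ∘ₗ LinearMap.mulRight k (s.left j)) (σ i).index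
            (σ i).left (σ i).right (σ i).eq.symm, Finset.sum_smul]
        exact Finset.sum_congr rfl fun p _ => by simp
    _ = ∑ j ∈ s.index, ∑ i ∈ r.index, ∑ p ∈ (σ i).index,
          (l ((σ i).left p) * l ((σ i).right p * s.left j)) • (r.right i * s.right j) :=
        Finset.sum_comm
    _ = ∑ j ∈ s.index, ∑ i ∈ r.index, ∑ p ∈ (τ i).index,
          (l (r.left i) * l ((τ i).left p * s.left j)) • ((τ i).right p * s.right j) :=
        Finset.sum_congr rfl fun j _ => key2 j
    _ = ∑ i ∈ r.index, ∑ j ∈ s.index, ∑ p ∈ (τ i).index,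
          (l (r.left i) * l ((τ i).left p * s.left j)) • ((τ i).right p * s.right j) :=
        Finset.sum_comm
    _ = lamL k l (lamL k l x * y) := by
        rw [lamL_sum k l r.index r.left r.right r.eq.symm, Finset.sum_mul, map_sum]
        refine Finset.sum_congr rfl fun i _ => ?_
        rw [smul_mul_assoc, map_smul,
          lamL_sum₂ k (τ i).index s.index _ _ (hcm i), Finset.smul_sum,
          Finset.sum_comm]
        refine Finset.sum_congr rfl fun j _ => ?_
        rw [Finset.smul_sum]
        exact Finset.sum_congr rfl fun p _ => by rw [smul_smul]

lemma conv_sum (f g : H →ₗ[k] H) {h : H} {ι : Type*} (s : Finset ι) (a b : ι → H)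
    (hc : comul (R := k) h = ∑ i ∈ s, a i ⊗ₜ[k] b i) :
    LinearMap.mul' k H (TensorProduct.map f g (comul (R := k) h)) =
      ∑ i ∈ s, f (a i) * g (b i) := by
  simp [hc, TensorProduct.map_tmul]

lemma comul_lamL_lamL (hyp : ∀ h : H, lamL k l h = lamL k l (lamR k l h)) (h : H) :
    comul (R := k) (lamL k l h) =
      TensorProduct.map (lamL k l) (lamL k l) (comul (R := k) h) := by
  have r := ℛ k h
  have a₁ : (i : r.ι) → Coalgebra.Repr k (r.left i) (H × H) := fun i => ℛ k (r.left i)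
  have a₂ : (i : r.ι) → Coalgebra.Repr k (r.right i) (H × H) := fun i => ℛ k (r.right i)
  have key := sum_tmul_tmul_eq r a₁ a₂
  apply_fun (TensorProduct.map (lamL k l)
    ((TensorProduct.lid k H).toLinearMap ∘ₗ TensorProduct.map l LinearMap.id)) at key
  simp only [map_sum, LinearMap.comp_apply, TensorProduct.map_tmul, LinearMap.id_apply,
    LinearEquiv.coe_coe, TensorProduct.lid_tmul] at key
  calc comul (R := k) (lamL k l h)
      = ∑ i ∈ r.index, lamL k l (r.left i) ⊗ₜ[k] r.right i := by
        rw [comul_lamL, ← r.eq, map_sum]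
        simp [TensorProduct.map_tmul]
    _ = ∑ i ∈ r.index, lamL k l (lamR k l (r.left i)) ⊗ₜ[k] r.right i := by
        exact Finset.sum_congr rfl fun i _ => by rw [← hyp]
    _ = ∑ i ∈ r.index, ∑ j ∈ (a₁ i).index,
          lamL k l ((a₁ i).left j) ⊗ₜ[k] (l ((a₁ i).right j) • r.right i) := by
        refine Finset.sum_congr rfl fun i _ => ?_
        rw [lamR_sum k l (a₁ i).index (a₁ i).left (a₁ i).right (a₁ i).eq.symm, map_sum,
          TensorProduct.sum_tmul]
        exact Finset.sum_congr rfl fun j _ => by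
          rw [map_smul, TensorProduct.smul_tmul]
    _ = ∑ i ∈ r.index, ∑ j ∈ (a₂ i).index,
          lamL k l (r.left i) ⊗ₜ[k] (l ((a₂ i).left j) • (a₂ i).right j) := key
    _ = ∑ i ∈ r.index, lamL k l (r.left i) ⊗ₜ[k] lamL k l (r.right i) := by
        refine Finset.sum_congr rfl fun i _ => ?_
        rw [← TensorProduct.tmul_sum,
          ← lamL_sum k l (a₂ i).index (a₂ i).left (a₂ i).right (a₂ i).eq.symm]
    _ = TensorProduct.map (lamL k l) (lamL k l) (comul (R := k) h) := by
        rw [← r.eq, map_sum]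
        simp [TensorProduct.map_tmul]

section Hopf

variable {H₂ : Type*} [Ring H₂] [HopfAlgebra k H₂] {l₂ : H₂ →ₗ[k] k}

/-- convolution product on endomorphisms -/
noncomputable def conv (f g : H₂ →ₗ[k] H₂) : H₂ →ₗ[k] H₂ :=
  LinearMap.mul' k H₂ ∘ₗ TensorProduct.map f g ∘ₗ comul

lemma conv_apply (f g : H₂ →ₗ[k] H₂) (h : H₂) :
    conv k f g h = LinearMap.mul' k H₂ (TensorProduct.map f g (comul (R := k) h)) := rfl

lemma conv_assoc (f g p : H₂ →ₗ[k] H₂) :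
    conv k (conv k f g) p = conv k f (conv k g p) := by
  apply LinearMap.ext; intro h
  have r := ℛ k h
  have a₁ : (i : r.ι) → Coalgebra.Repr k (r.left i) (H₂ × H₂) := fun i => ℛ k (r.left i)
  have a₂ : (i : r.ι) → Coalgebra.Repr k (r.right i) (H₂ × H₂) := fun i => ℛ k (r.right i)
  have key := sum_tmul_tmul_eq r a₁ a₂
  apply_fun (LinearMap.mul' k H₂ ∘ₗ
    TensorProduct.map f (LinearMap.mul' k H₂ ∘ₗ TensorProduct.map g p)) at key
  simp only [map_sum, LinearMap.comp_apply, TensorProduct.map_tmul,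
    LinearMap.mul'_apply] at key
  calc conv k (conv k f g) p h
      = ∑ i ∈ r.index, conv k f g (r.left i) * p (r.right i) := by
        rw [conv_apply, conv_sum k (conv k f g) p r.index r.left r.right r.eq.symm]
    _ = ∑ i ∈ r.index, ∑ j ∈ (a₁ i).index,
          f ((a₁ i).left j) * (g ((a₁ i).right j) * p (r.right i)) := by
        refine Finset.sum_congr rfl fun i _ => ?_
        rw [conv_apply, conv_sum k f g (a₁ i).index (a₁ i).left (a₁ i).right (a₁ i).eq.symm,
          Finset.sum_mul]
        exact Finset.sum_congr rfl fun j _ => mul_assoc _ _ _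
    _ = ∑ i ∈ r.index, ∑ j ∈ (a₂ i).index,
          f (r.left i) * (g ((a₂ i).left j) * p ((a₂ i).right j)) := key
    _ = ∑ i ∈ r.index, f (r.left i) * conv k g p (r.right i) := by
        refine Finset.sum_congr rfl fun i _ => ?_
        rw [conv_apply, conv_sum k g p (a₂ i).index (a₂ i).left (a₂ i).right (a₂ i).eq.symm,
          Finset.mul_sum]
    _ = conv k f (conv k g p) h := by
        rw [conv_apply, conv_sum k f (conv k g p) r.index r.left r.right r.eq.symm]

lemma conv_add_right (f g g' : H₂ →ₗ[k] H₂) :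
    conv k f (g + g') = conv k f g + conv k f g' := by
  unfold conv
  rw [TensorProduct.map_add_right, LinearMap.add_comp, LinearMap.comp_add]

lemma conv_smul_right (c : k) (f g : H₂ →ₗ[k] H₂) :
    conv k f (c • g) = c • conv k f g := by
  unfold conv
  rw [TensorProduct.map_smul_right, LinearMap.smul_comp, LinearMap.comp_smul]

lemma range_mul_mem (hpa : IsPartialAction k l₂) {a b : H₂}
    (ha : a ∈ LinearMap.range (lamL k l₂)) (hb : b ∈ LinearMap.range (lamL k l₂)) :
    a * b ∈ LinearMap.range (lamL k l₂) := by
  obtain ⟨x, rfl⟩ := ha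
  obtain ⟨y, rfl⟩ := hb
  rw [mul_lamL k hpa]
  exact ⟨_, rfl⟩

lemma mul'_map_mem (hpa : IsPartialAction k l₂) {f g : H₂ →ₗ[k] H₂}
    (hf : ∀ x, f x ∈ LinearMap.range (lamL k l₂)) (hg : ∀ x, g x ∈ LinearMap.range (lamL k l₂))
    (t : H₂ ⊗[k] H₂) :
    LinearMap.mul' k H₂ (TensorProduct.map f g t) ∈ LinearMap.range (lamL k l₂) := by
  induction t using TensorProduct.induction_on with
  | zero => simpa using zero_mem _
  | tmul a b =>
      rw [TensorProduct.map_tmul, LinearMap.mul'_apply]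
      exact range_mul_mem k hpa (hf a) (hg b)
  | add a b ha hb =>
      rw [map_add, map_add]
      exact add_mem ha hb

/-- the analogue of `Hom(B, H)` as a submodule of `End(H)` -/
noncomputable def Wmod (l₂ : H₂ →ₗ[k] k) : Submodule k (H₂ →ₗ[k] H₂) where
  carrier := {f | f ∘ₗ lamL k l₂ = f ∧ ∀ x, f x ∈ LinearMap.range (lamL k l₂)}
  add_mem' := fun hf hg =>
    ⟨by rw [LinearMap.add_comp, hf.1, hg.1], fun x => add_mem (hf.2 x) (hg.2 x)⟩
  zero_mem' := ⟨LinearMap.zero_comp _, fun x => zero_mem _⟩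
  smul_mem' := fun c f hf =>
    ⟨by rw [LinearMap.smul_comp, hf.1], fun x => Submodule.smul_mem _ c (hf.2 x)⟩

lemma conv_comp_lamL (hyp : ∀ h : H₂, lamL k l₂ h = lamL k l₂ (lamR k l₂ h))
    (f g : H₂ →ₗ[k] H₂) :
    conv k f g ∘ₗ lamL k l₂ = conv k (f ∘ₗ lamL k l₂) (g ∘ₗ lamL k l₂) := by
  apply LinearMap.ext; intro h
  rw [LinearMap.comp_apply, conv_apply, conv_apply, comul_lamL_lamL k hyp,
    ← LinearMap.comp_apply (TensorProduct.map f g), ← TensorProduct.map_comp]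

lemma conv_mem (hpa : IsPartialAction k l₂)
    (hyp : ∀ h : H₂, lamL k l₂ h = lamL k l₂ (lamR k l₂ h))
    {f g : H₂ →ₗ[k] H₂} (hf : f ∈ Wmod k l₂) (hg : g ∈ Wmod k l₂) :
    conv k f g ∈ Wmod k l₂ := by
  refine ⟨?_, fun x => mul'_map_mem k hpa hf.2 hg.2 _⟩
  rw [conv_comp_lamL k hyp, hf.1, hg.1]

lemma eta_l_mem (hpa : IsPartialAction k l₂) :
    (Algebra.linearMap k H₂ ∘ₗ l₂) ∈ Wmod k l₂ := by
  constructor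
  · rw [LinearMap.comp_assoc]
    congr 1
    exact LinearMap.ext (l_lamL k hpa)
  · intro x
    have h1 : (1 : H₂) ∈ LinearMap.range (lamL k l₂) := ⟨1, lamL_one k hpa⟩
    have : (Algebra.linearMap k H₂ ∘ₗ l₂) x = l₂ x • (1 : H₂) := by
      simp [Algebra.algebraMap_eq_smul_one]
    rw [this]
    exact Submodule.smul_mem _ _ h1

lemma lamL_mem_W (hpa : IsPartialAction k l₂) : lamL k l₂ ∈ Wmod k l₂ :=
  ⟨LinearMap.ext (lamL_lamL k hpa), fun x => ⟨x, rfl⟩⟩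

lemma conv_eta_l_left (hpa : IsPartialAction k l₂) {f : H₂ →ₗ[k] H₂}
    (hf : f ∘ₗ lamL k l₂ = f) :
    conv k (Algebra.linearMap k H₂ ∘ₗ l₂) f = f := by
  apply LinearMap.ext; intro h
  have r := ℛ k h
  have step1 : conv k (Algebra.linearMap k H₂ ∘ₗ l₂) f h = f (lamL k l₂ h) := by
    rw [conv_apply, conv_sum k _ f r.index r.left r.right r.eq.symm,
      lamL_sum k l₂ r.index r.left r.right r.eq.symm, map_sum]
    exact Finset.sum_congr rfl fun i _ => by
      simp [Algebra.algebraMap_eq_smul_one, smul_mul_assoc]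
  rw [step1, ← LinearMap.comp_apply, hf]

lemma conv_eta_l_right (hpa : IsPartialAction k l₂)
    (hyp : ∀ h : H₂, lamL k l₂ h = lamL k l₂ (lamR k l₂ h)) {f : H₂ →ₗ[k] H₂}
    (hf : f ∘ₗ lamL k l₂ = f) :
    conv k f (Algebra.linearMap k H₂ ∘ₗ l₂) = f := by
  apply LinearMap.ext; intro h
  have r := ℛ k h
  have step1 : conv k f (Algebra.linearMap k H₂ ∘ₗ l₂) h = f (lamR k l₂ h) := by
    rw [conv_apply, conv_sum k f _ r.index r.left r.right r.eq.symm,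
      lamR_sum k l₂ r.index r.left r.right r.eq.symm, map_sum]
    exact Finset.sum_congr rfl fun i _ => by
      simp [Algebra.algebraMap_eq_smul_one, mul_smul_comm]
  rw [step1]
  calc f (lamR k l₂ h) = (f ∘ₗ lamL k l₂) (lamR k l₂ h) := by rw [hf]
    _ = f (lamL k l₂ (lamR k l₂ h)) := rfl
    _ = f (lamL k l₂ h) := by rw [← hyp]
    _ = (f ∘ₗ lamL k l₂) h := rfl
    _ = f h := by rw [hf]

lemma conv_lamL_antipode (hyp : ∀ h : H₂, lamL k l₂ h = lamL k l₂ (lamR k l₂ h)) :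
    conv k (lamL k l₂) (antipode (R := k) ∘ₗ lamL k l₂) = Algebra.linearMap k H₂ ∘ₗ l₂ := by
  apply LinearMap.ext; intro h
  have h1 : TensorProduct.map (lamL k l₂) (antipode (R := k) ∘ₗ lamL k l₂) =
      TensorProduct.map LinearMap.id (antipode (R := k)) ∘ₗ
        TensorProduct.map (lamL k l₂) (lamL k l₂) := by
    rw [← TensorProduct.map_comp, LinearMap.id_comp]
  have h2 : TensorProduct.map (LinearMap.id : H₂ →ₗ[k] H₂) (antipode (R := k)) =
      (antipode (R := k) (A := H₂)).lTensor H₂ := rfl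
  rw [conv_apply, h1, LinearMap.comp_apply, ← comul_lamL_lamL k hyp, h2,
    mul_antipode_lTensor_comul_apply, counit_lamL]
  rfl

lemma antipode_conv_lamL (hyp : ∀ h : H₂, lamL k l₂ h = lamL k l₂ (lamR k l₂ h)) :
    conv k (antipode (R := k) ∘ₗ lamL k l₂) (lamL k l₂) = Algebra.linearMap k H₂ ∘ₗ l₂ := by
  apply LinearMap.ext; intro h
  have h1 : TensorProduct.map (antipode (R := k) ∘ₗ lamL k l₂) (lamL k l₂) =
      TensorProduct.map (antipode (R := k)) LinearMap.id ∘ₗ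
        TensorProduct.map (lamL k l₂) (lamL k l₂) := by
    rw [← TensorProduct.map_comp, LinearMap.id_comp]
  have h2 : TensorProduct.map (antipode (R := k)) (LinearMap.id : H₂ →ₗ[k] H₂) =
      (antipode (R := k) (A := H₂)).rTensor H₂ := rfl
  rw [conv_apply, h1, LinearMap.comp_apply, ← comul_lamL_lamL k hyp, h2,
    mul_antipode_rTensor_comul_apply, counit_lamL]
  rfl

lemma antipode_lamL_mem [FiniteDimensional k H₂] (hpa : IsPartialAction k l₂)
    (hyp : ∀ h : H₂, lamL k l₂ h = lamL k l₂ (lamR k l₂ h)) (h : H₂) :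
    antipode (R := k) (lamL k l₂ h) ∈ LinearMap.range (lamL k l₂) := by
  classical
  set e := lamL k l₂ with he
  set Se := antipode (R := k) ∘ₗ e with hSe
  set ηl := Algebra.linearMap k H₂ ∘ₗ l₂ with hηl
  have hee : e ∘ₗ e = e := LinearMap.ext (lamL_lamL k hpa)
  have hSe_comp : Se ∘ₗ e = Se := by
    rw [hSe, LinearMap.comp_assoc, hee]
  -- the left-convolution-by-e endomorphism of Wmod
  let L : Wmod k l₂ →ₗ[k] Wmod k l₂ :=
    { toFun := fun f => ⟨conv k e f.1, conv_mem k hpa hyp (lamL_mem_W k hpa) f.2⟩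
      map_add' := fun f g => Subtype.ext (conv_add_right k e f.1 g.1)
      map_smul' := fun c f => Subtype.ext (conv_smul_right k c e f.1) }
  have hinj : Function.Injective L := by
    intro f g hfg
    have h1 : conv k e f.1 = conv k e g.1 := congrArg Subtype.val hfg
    have h2 : conv k Se (conv k e f.1) = conv k Se (conv k e g.1) := by rw [h1]
    rw [← conv_assoc, ← conv_assoc, antipode_conv_lamL k hyp] at h2
    have := (conv_eta_l_left k hpa f.2.1).symm.trans
      (h2.trans (conv_eta_l_left k hpa g.2.1))
    exact Subtype.ext this
  have hsurj : Function.Surjective L := by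
    haveI : FiniteDimensional k (H₂ →ₗ[k] H₂) := inferInstance
    haveI : FiniteDimensional k (Wmod k l₂) := inferInstance
    exact (LinearMap.injective_iff_surjective (K := k) (V := Wmod k l₂) (f := L)).mp hinj
  obtain ⟨z, hz⟩ := hsurj ⟨ηl, eta_l_mem k hpa⟩
  have hz1 : conv k e z.1 = ηl := congrArg Subtype.val hz
  have hzSe : z.1 = Se := by
    have h2 : conv k Se (conv k e z.1) = conv k Se ηl := by rw [hz1]
    rw [← conv_assoc, antipode_conv_lamL k hyp, conv_eta_l_left k hpa z.2.1,
      conv_eta_l_right k hpa hyp hSe_comp] at h2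
    exact h2
  have : Se h ∈ LinearMap.range (lamL k l₂) := hzSe ▸ z.2.2 h
  exact this

end Hopf

end Lemmas

/-- for finite-dimensional `H`, `H_l` (range of `lamL`) is a Hopf subalgebra
of `H` (closed under comultiplication and antipode) iff `l(h₁)h₂ = l(h₁)h₂ l(h₃)` for all
`h`, the right-hand side being `lamL (lamR h)`. -/
theorem range_lamL_hopfSubalgebra_iff {H : Type*} [Ring H] [HopfAlgebra k H]
    [FiniteDimensional k H] {l : H →ₗ[k] k} (hpa : IsPartialAction k l) :
    ((∀ a ∈ LinearMap.range (lamL k l),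
        comul (R := k) a ∈ LinearMap.range
          (TensorProduct.map (LinearMap.range (lamL k l)).subtype
            (LinearMap.range (lamL k l)).subtype)) ∧
      (∀ a ∈ LinearMap.range (lamL k l), antipode (R := k) a ∈ LinearMap.range (lamL k l)))
    ↔ (∀ h : H, lamL k l h = lamL k l (lamR k l h)) := by
  constructor
  · rintro ⟨hΔ, -⟩
    exact forward_dir k hpa hΔ
  · intro hyp
    refine ⟨?_, ?_⟩
    · rintro a ⟨h, rfl⟩
      refine ⟨TensorProduct.map
        ((lamL k l).codRestrict (LinearMap.range (lamL k l)) (LinearMap.mem_range_self (lamL k l)))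
        ((lamL k l).codRestrict (LinearMap.range (lamL k l)) (LinearMap.mem_range_self (lamL k l)))
        (comul (R := k) h), ?_⟩
      rw [← LinearMap.comp_apply, ← TensorProduct.map_comp,
        LinearMap.subtype_comp_codRestrict, ← comul_lamL_lamL k hyp h]
    · rintro a ⟨h, rfl⟩
      exact antipode_lamL_mem k hpa hyp h
end
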